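/- Let α be an element of a field K of characteristic ≠ 2,3 with α³ ≠ 27, and let x₁, x₂, x₃ be the roots (in an algebraic closure) of X³ + (α²/3)X² + αX + 1 = 0. Then the polynomial identity T³ − (α³ − 27) = ∏_{1≤i<j≤3} (T − α + 3·x_i·x_j) holds. -/
import Mathlib


open Polynomial

/-- Let `α` be an element of a field `K` of characteristic `≠ 2, 3` with `α³ ≠ 27`, and let
`x₁, x₂, x₃` be the roots (in an algebraic closure) of `X³ + (α²/3)X² + αX + 1 = 0`.
Then the polynomial identity
`T³ − (α³ − 27) = ∏_{1 ≤ i < j ≤ 3} (T − α + 3xᵢxⱼ)` holds. -/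
theorem stmt_15 (K : Type*) [Field K] (h2 : (2 : K) ≠ 0) (h3 : (3 : K) ≠ 0)
    (α : K) (hα : α ^ 3 ≠ 27) (x₁ x₂ x₃ : AlgebraicClosure K)
    (β : AlgebraicClosure K) (hβ : β = algebraMap K (AlgebraicClosure K) α)
    (hroots : (X ^ 3 + C (β ^ 2 / 3) * X ^ 2 + C β * X + 1 : Polynomial (AlgebraicClosure K)) =
      (X - C x₁) * (X - C x₂) * (X - C x₃)) :
    (X ^ 3 - C (β ^ 3 - 27) : Polynomial (AlgebraicClosure K)) =
      (X - C β + C (3 * x₁ * x₂)) * (X - C β + C (3 * x₁ * x₃)) * (X - C β + C (3 * x₂ * x₃)) := by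
  have expand : ∀ a b c : AlgebraicClosure K, (X - C a) * (X - C b) * (X - C c)
      = X ^ 3 - C (a + b + c) * X ^ 2 + C (a*b + a*c + b*c) * X - C (a*b*c) := by
    intro a b c
    simp only [C_add, C_mul]
    ring
  rw [expand] at hroots
  have hc2 := congrArg (fun p => Polynomial.coeff p 2) hroots
  have hc1 := congrArg (fun p => Polynomial.coeff p 1) hroots
  have hc0 := congrArg (fun p => Polynomial.coeff p 0) hroots
  simp [coeff_C_mul, coeff_one, coeff_X, coeff_X_pow, -map_add] at hc2 hc1 hc0
  have h3' : (3 : AlgebraicClosure K) ≠ 0 := by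
    rw [show (3 : AlgebraicClosure K) = algebraMap K (AlgebraicClosure K) 3 by rw [map_ofNat]]
    exact (_root_.map_ne_zero _).mpr h3
  rw [div_eq_iff h3'] at hc2
  -- hc2 : β ^ 2 = (-x₃ + (-x₂ + -x₁)) * 3
  -- hc1 : β = x₁ * x₂ + x₁ * x₃ + x₂ * x₃
  -- hc0 : 1 = -(x₁ * x₂ * x₃)
  have key : (X - C β + C (3*x₁*x₂)) * (X - C β + C (3*x₁*x₃)) * (X - C β + C (3*x₂*x₃))
      = X ^ 3 + C ((3*x₁*x₂ - β) + (3*x₁*x₃ - β) + (3*x₂*x₃ - β)) * X ^ 2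
        + C ((3*x₁*x₂ - β)*(3*x₁*x₃ - β) + (3*x₁*x₂ - β)*(3*x₂*x₃ - β)
            + (3*x₁*x₃ - β)*(3*x₂*x₃ - β)) * X
        + C ((3*x₁*x₂ - β)*(3*x₁*x₃ - β)*(3*x₂*x₃ - β)) := by
    simp only [C_add, C_mul, C_sub]
    ring
  have s2 : (3*x₁*x₂ - β) + (3*x₁*x₃ - β) + (3*x₂*x₃ - β) = 0 := by
    linear_combination -3*hc1
  have s1 : (3*x₁*x₂ - β)*(3*x₁*x₃ - β) + (3*x₁*x₂ - β)*(3*x₂*x₃ - β)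
      + (3*x₁*x₃ - β)*(3*x₂*x₃ - β) = 0 := by
    linear_combination 3*(x₁*x₂*x₃)*hc2 - 3*β^2*hc0 + 6*β*hc1
  have s0 : (3*x₁*x₂ - β)*(3*x₁*x₃ - β)*(3*x₂*x₃ - β) = -(β^3 - 27) := by
    linear_combination (27*(x₁*x₂*x₃-1)+3*β^3)*hc0 + (-3*β*(x₁*x₂*x₃))*hc2 + (-3*β^2)*hc1
  rw [key, s2, s1, s0, C_neg, C_0]
  ring
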